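/- Let σ : ℕ → ℚ satisfy σ 0 = 0, σ 1 = 1/2 and, for every n ≥ 2, σ n = (1/2)·Σ_{l=1}^{n-1} σ l · σ (n-l); let κ : ℕ → ℚ satisfy κ 0 = 1 and, for every n ≥ 1, κ n = Σ_{m=1}^{n} κ (n-m) · σ m. Then the generating series S := Σ σ n Xⁿ and K := Σ κ n Xⁿ in ℚ[[X]] satisfy S·K = K - 1 (equivalently K·(1 - S) = 1), and consequently K²·(1 - X) = 1, i.e. K is the formal power series of 1/√(1-x). -/

import Mathlib

open PowerSeries

theorem genfun_kappa_inv_sqrt (σ κ : ℕ → ℚ)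
    (hσ0 : σ 0 = 0) (hσ1 : σ 1 = 1/2)
    (hσrec : ∀ n : ℕ, 2 ≤ n → σ n = (1/2) * ∑ l ∈ Finset.Ico 1 n, σ l * σ (n - l))
    (hκ0 : κ 0 = 1)
    (hκrec : ∀ n : ℕ, 1 ≤ n → κ n = ∑ m ∈ Finset.Icc 1 n, κ (n - m) * σ m) :
    let S : ℚ⟦X⟧ := PowerSeries.mk σ
    let K : ℚ⟦X⟧ := PowerSeries.mk κ
    S * K = K - 1 ∧ K * (1 - S) = 1 ∧ K ^ 2 * (1 - PowerSeries.X) = 1 := by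
  intro S K
  have hSK : (PowerSeries.mk σ) * (PowerSeries.mk κ) = (PowerSeries.mk κ) - 1 := by
    ext n
    rw [coeff_mul, Finset.Nat.sum_antidiagonal_eq_sum_range_succ_mk]
    rcases Nat.eq_zero_or_pos n with rfl | hn
    · simp [hσ0, hκ0]
    · have h1 : (PowerSeries.coeff n) (1 : ℚ⟦X⟧) = 0 := by
        simp [coeff_one, Nat.pos_iff_ne_zero.mp hn]
      rw [map_sub, h1, coeff_mk, sub_zero, hκrec n hn]
      rw [Finset.range_eq_Ico, Finset.sum_eq_sum_Ico_succ_bot (by omega : 0 < n + 1)]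
      simp only [coeff_mk, hσ0, zero_mul, zero_add, Finset.Ico_add_one_right_eq_Icc]
      exact Finset.sum_congr rfl fun m _ => mul_comm _ _
  have hKS : K * (1 - S) = 1 := by
    show (PowerSeries.mk κ) * (1 - PowerSeries.mk σ) = 1
    have h : (PowerSeries.mk κ) * (1 - PowerSeries.mk σ)
        = (PowerSeries.mk κ) - (PowerSeries.mk σ) * (PowerSeries.mk κ) := by ring
    rw [h, hSK]; ring
  have h2 : (1 - PowerSeries.mk σ) ^ 2 = 1 - PowerSeries.X := by
    have hS2 : (PowerSeries.mk σ) * (PowerSeries.mk σ)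
        = (PowerSeries.mk σ) + (PowerSeries.mk σ) - PowerSeries.X := by
      ext n
      rw [coeff_mul, Finset.Nat.sum_antidiagonal_eq_sum_range_succ_mk]
      rcases n with _ | _ | n
      · simp [hσ0]
      · simp [Finset.sum_range_succ, hσ0, hσ1]
        norm_num
      · have hn2 : 2 ≤ n + 2 := by omega
        rw [Finset.range_eq_Ico, Finset.sum_eq_sum_Ico_succ_bot (by omega : 0 < n + 2 + 1)]
        rw [Finset.sum_Ico_succ_top (by omega : 1 ≤ n + 2)]
        simp only [coeff_mk, map_sub, map_add, Nat.sub_zero, Nat.sub_self, hσ0,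
          zero_mul, mul_zero, zero_add, add_zero]
        rw [coeff_X, if_neg (by omega)]
        have := hσrec (n + 2) hn2
        rw [show n + 1 + 1 = n + 2 from rfl, this]
        ring
    linear_combination hS2
  refine ⟨hSK, hKS, ?_⟩
  show (PowerSeries.mk κ) ^ 2 * (1 - PowerSeries.X) = 1
  calc (PowerSeries.mk κ) ^ 2 * (1 - PowerSeries.X)
      = ((PowerSeries.mk κ) * (1 - PowerSeries.mk σ)) ^ 2 := by rw [← h2]; ring
    _ = 1 := by rw [show ((PowerSeries.mk κ) * (1 - PowerSeries.mk σ)) = 1 from hKS, one_pow]
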